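/- Let A, E ∈ ℝ^{n×n} be symmetric, let Z, δZ ∈ ℝ^{n×n} be such that P = Z + δZ is orthogonal, and let D ∈ ℝ^{n×n} be diagonal with A + E = P D Pᵀ. Then for every Q ∈ ℝ^{n×n}, ‖off(Qᵀ A Q)‖_F ≤ ‖A‖·‖Q − Z‖_F² + 2‖A‖·‖Z‖·‖Q − Z‖_F + ‖A‖_F (2‖Z‖ + ‖δZ‖) ‖δZ‖ + ‖E‖_F. -/

import Mathlib

open Matrix

noncomputable def specNorm {m n : ℕ} (A : Matrix (Fin m) (Fin n) ℝ) : ℝ :=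
  ‖LinearMap.toContinuousLinearMap (Matrix.toEuclideanLin A)‖

noncomputable def frobNorm {m n : ℕ} (A : Matrix (Fin m) (Fin n) ℝ) : ℝ :=
  Real.sqrt (∑ p, ∑ q, (A p q) ^ 2)

def offDiag {n : ℕ} (A : Matrix (Fin n) (Fin n) ℝ) : Matrix (Fin n) (Fin n) ℝ :=
  fun p q => if p = q then 0 else A p q

def jacobiRot {n : ℕ} (i j : Fin n) (c s : ℝ) : Matrix (Fin n) (Fin n) ℝ :=
  fun p q =>
    if p = i ∧ q = i then c
    else if p = j ∧ q = j then c
    else if p = i ∧ q = j then s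
    else if p = j ∧ q = i then -s
    else if p = q then 1 else 0

open Classical in
noncomputable def eigValsDesc {n : ℕ} (A : Matrix (Fin n) (Fin n) ℝ) : Fin n → ℝ :=
  if hA : A.IsHermitian then
    fun k => (hA.eigenvalues ∘ Tuple.sort hA.eigenvalues) k.rev
  else 0

noncomputable def singValsDesc {m n : ℕ} (A : Matrix (Fin m) (Fin n) ℝ) : Fin n → ℝ :=
  fun k => Real.sqrt (eigValsDesc (Aᵀ * A) k)

namespace OffQAQAux

variable {m n l k : ℕ}

lemma spec_nonneg (A : Matrix (Fin m) (Fin n) ℝ) : 0 ≤ specNorm A := norm_nonneg _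

lemma frob_nonneg (A : Matrix (Fin m) (Fin n) ℝ) : 0 ≤ frobNorm A := Real.sqrt_nonneg _

lemma frob_eq_norm (A : Matrix (Fin m) (Fin n) ℝ) :
    frobNorm A = ‖((WithLp.equiv 2 (Fin m × Fin n → ℝ)).symm
      (fun pq => A pq.1 pq.2) : EuclideanSpace ℝ (Fin m × Fin n))‖ := by
  rw [EuclideanSpace.norm_eq]
  simp [frobNorm, Fintype.sum_prod_type, Real.norm_eq_abs, sq_abs]

lemma frob_add_le (A B : Matrix (Fin m) (Fin n) ℝ) :
    frobNorm (A + B) ≤ frobNorm A + frobNorm B := by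
  rw [frob_eq_norm, frob_eq_norm, frob_eq_norm]
  exact (show _ = ‖(WithLp.toLp 2 (fun pq : Fin m × Fin n => A pq.1 pq.2) :
    EuclideanSpace ℝ (Fin m × Fin n)) + WithLp.toLp 2 (fun pq : Fin m × Fin n => B pq.1 pq.2)‖
    from rfl).trans_le (norm_add_le _ _)

lemma frob_neg (A : Matrix (Fin m) (Fin n) ℝ) : frobNorm (-A) = frobNorm A := by
  simp [frobNorm]

lemma frob_sub_le (A B : Matrix (Fin m) (Fin n) ℝ) :
    frobNorm (A - B) ≤ frobNorm A + frobNorm B := by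
  rw [sub_eq_add_neg]
  calc frobNorm (A + -B) ≤ frobNorm A + frobNorm (-B) := frob_add_le _ _
    _ = frobNorm A + frobNorm B := by rw [frob_neg]

lemma frob_transpose (A : Matrix (Fin m) (Fin n) ℝ) : frobNorm Aᵀ = frobNorm A := by
  unfold frobNorm
  rw [Finset.sum_comm]
  rfl

section Spec
open scoped Matrix.Norms.L2Operator

lemma spec_eq (A : Matrix (Fin m) (Fin n) ℝ) : specNorm A = ‖A‖ := rfl

lemma conjT_eq (A : Matrix (Fin m) (Fin n) ℝ) : Aᴴ = Aᵀ := by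
  ext i j; simp [Matrix.conjTranspose_apply]

lemma spec_transpose (A : Matrix (Fin m) (Fin n) ℝ) : specNorm Aᵀ = specNorm A := by
  rw [spec_eq, spec_eq, ← conjT_eq, Matrix.l2_opNorm_conjTranspose]

lemma spec_one_le : specNorm (1 : Matrix (Fin n) (Fin n) ℝ) ≤ 1 := by
  have h1 : LinearMap.toContinuousLinearMap
      (Matrix.toEuclideanLin (1 : Matrix (Fin n) (Fin n) ℝ)) = ContinuousLinearMap.id ℝ _ := by
    ext x
    simp [Matrix.toEuclideanLin_apply, Matrix.one_mulVec]
  rw [specNorm, h1]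
  exact ContinuousLinearMap.norm_id_le

lemma spec_orth_le_one {P : Matrix (Fin n) (Fin n) ℝ} (h : Pᵀ * P = 1) : specNorm P ≤ 1 := by
  have hs : specNorm P * specNorm P = specNorm (Pᵀ * P) := by
    rw [spec_eq, spec_eq, ← conjT_eq, Matrix.l2_opNorm_conjTranspose_mul_self]
  have h2 : specNorm P * specNorm P ≤ 1 := by
    rw [hs, h]; exact spec_one_le
  nlinarith [spec_nonneg P]

end Spec

lemma spec_mulVec (A : Matrix (Fin m) (Fin n) ℝ) (x : Fin n → ℝ) :
    Real.sqrt (∑ p, (A *ᵥ x) p ^ 2) ≤ specNorm A * Real.sqrt (∑ i, x i ^ 2) := by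
  have h := (LinearMap.toContinuousLinearMap (Matrix.toEuclideanLin A)).le_opNorm
    ((WithLp.equiv 2 (Fin n → ℝ)).symm x)
  rw [LinearMap.coe_toContinuousLinearMap'] at h
  rw [WithLp.equiv_symm_apply, Matrix.toEuclideanLin_apply_piLp_toLp] at h
  rw [EuclideanSpace.norm_eq, EuclideanSpace.norm_eq] at h
  simpa [Real.norm_eq_abs, sq_abs, specNorm, PiLp.toLp_apply] using h

lemma frob_mul_le_spec_frob (A : Matrix (Fin m) (Fin n) ℝ) (B : Matrix (Fin n) (Fin l) ℝ) :
    frobNorm (A * B) ≤ specNorm A * frobNorm B := by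
  have key : ∀ q, ∑ p, (A * B) p q ^ 2 ≤ specNorm A ^ 2 * ∑ i, B i q ^ 2 := by
    intro q
    have h := spec_mulVec A (fun i => B i q)
    have h1 : (0:ℝ) ≤ ∑ p, (A *ᵥ fun i => B i q) p ^ 2 := by positivity
    have h2 : (0:ℝ) ≤ ∑ i, B i q ^ 2 := by positivity
    have hsq : (∑ p, (A *ᵥ fun i => B i q) p ^ 2)
        ≤ (specNorm A * Real.sqrt (∑ i, B i q ^ 2)) ^ 2 := by
      nlinarith [Real.sq_sqrt h1, Real.sqrt_nonneg (∑ p, (A *ᵥ fun i => B i q) p ^ 2),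
        spec_nonneg A, Real.sqrt_nonneg (∑ i, B i q ^ 2)]
    have heq : (specNorm A * Real.sqrt (∑ i, B i q ^ 2)) ^ 2
        = specNorm A ^ 2 * ∑ i, B i q ^ 2 := by
      rw [mul_pow, Real.sq_sqrt h2]
    rw [heq] at hsq
    have hAB : ∀ p, (A * B) p q = (A *ᵥ fun i => B i q) p := by
      intro p; simp [Matrix.mul_apply, Matrix.mulVec, dotProduct]
    simpa only [hAB] using hsq
  unfold frobNorm
  rw [Finset.sum_comm]
  have hle : ∑ q, ∑ p, (A * B) p q ^ 2 ≤ specNorm A ^ 2 * ∑ q, ∑ i, B i q ^ 2 := by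
    rw [Finset.mul_sum]
    exact Finset.sum_le_sum fun q _ => key q
  calc Real.sqrt (∑ q, ∑ p, (A * B) p q ^ 2)
      ≤ Real.sqrt (specNorm A ^ 2 * ∑ q, ∑ i, B i q ^ 2) := Real.sqrt_le_sqrt hle
    _ = specNorm A * Real.sqrt (∑ q, ∑ i, B i q ^ 2) := by
        rw [Real.sqrt_mul (by positivity), Real.sqrt_sq (spec_nonneg A)]
    _ = specNorm A * Real.sqrt (∑ i, ∑ q, B i q ^ 2) := by rw [Finset.sum_comm]

lemma frob_mul_le_frob_spec (A : Matrix (Fin m) (Fin n) ℝ) (B : Matrix (Fin n) (Fin l) ℝ) :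
    frobNorm (A * B) ≤ frobNorm A * specNorm B := by
  rw [← frob_transpose (A * B), Matrix.transpose_mul]
  calc frobNorm (Bᵀ * Aᵀ) ≤ specNorm Bᵀ * frobNorm Aᵀ := frob_mul_le_spec_frob _ _
    _ = frobNorm A * specNorm B := by rw [spec_transpose, frob_transpose]; ring

lemma frob_triple (X : Matrix (Fin m) (Fin n) ℝ) (Y : Matrix (Fin n) (Fin l) ℝ)
    (W : Matrix (Fin l) (Fin k) ℝ) :
    frobNorm (X * Y * W) ≤ specNorm X * frobNorm Y * specNorm W := by
  calc frobNorm (X * Y * W) ≤ frobNorm (X * Y) * specNorm W := frob_mul_le_frob_spec _ _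
    _ ≤ specNorm X * frobNorm Y * specNorm W := by
        have := frob_mul_le_spec_frob X Y
        exact mul_le_mul_of_nonneg_right this (spec_nonneg W)

lemma spec_le_frob (A : Matrix (Fin m) (Fin n) ℝ) : specNorm A ≤ frobNorm A := by
  apply ContinuousLinearMap.opNorm_le_bound _ (frob_nonneg A)
  intro x
  rw [LinearMap.coe_toContinuousLinearMap']
  rw [Matrix.toEuclideanLin_apply]
  rw [EuclideanSpace.norm_eq, EuclideanSpace.norm_eq]
  simp only [PiLp.toLp_apply, Real.norm_eq_abs, sq_abs]
  set y : Fin n → ℝ := (WithLp.equiv 2 (Fin n → ℝ)) x with hy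
  have CS : ∀ p, (A *ᵥ y) p ^ 2 ≤ (∑ i, A p i ^ 2) * (∑ i, y i ^ 2) := by
    intro p
    have h1 := Real.sum_mul_le_sqrt_mul_sqrt Finset.univ (fun i => A p i) y
    have h2 := Real.sum_mul_le_sqrt_mul_sqrt Finset.univ (fun i => -A p i) y
    simp only [neg_mul, Finset.sum_neg_distrib, neg_sq] at h2
    have hmv : (A *ᵥ y) p = ∑ i, A p i * y i := rfl
    rw [hmv]
    have hb : (0:ℝ) ≤ Real.sqrt (∑ i, A p i ^ 2) * Real.sqrt (∑ i, y i ^ 2) := by positivity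
    have hsq : (∑ i, A p i * y i) ^ 2
        ≤ (Real.sqrt (∑ i, A p i ^ 2) * Real.sqrt (∑ i, y i ^ 2)) ^ 2 := by
      exact sq_le_sq' (by linarith [h2]) h1
    calc (∑ i, A p i * y i) ^ 2
        ≤ (Real.sqrt (∑ i, A p i ^ 2) * Real.sqrt (∑ i, y i ^ 2)) ^ 2 := hsq
      _ = (∑ i, A p i ^ 2) * (∑ i, y i ^ 2) := by
          rw [mul_pow, Real.sq_sqrt (by positivity), Real.sq_sqrt (by positivity)]
  have hsum : ∑ p, (A *ᵥ y) p ^ 2 ≤ (∑ p, ∑ i, A p i ^ 2) * (∑ i, y i ^ 2) := by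
    rw [Finset.sum_mul]
    exact Finset.sum_le_sum fun p _ => CS p
  calc Real.sqrt (∑ p, (A *ᵥ y) p ^ 2)
      ≤ Real.sqrt ((∑ p, ∑ i, A p i ^ 2) * (∑ i, y i ^ 2)) := Real.sqrt_le_sqrt hsum
    _ = frobNorm A * Real.sqrt (∑ i, y i ^ 2) := by
        rw [Real.sqrt_mul (by positivity)]; rfl

lemma off_add (M N : Matrix (Fin n) (Fin n) ℝ) :
    offDiag (M + N) = offDiag M + offDiag N := by
  ext p q; by_cases h : p = q <;> simp [offDiag, h]

lemma off_sub (M N : Matrix (Fin n) (Fin n) ℝ) :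
    offDiag (M - N) = offDiag M - offDiag N := by
  ext p q; by_cases h : p = q <;> simp [offDiag, h]

lemma off_isDiag {D : Matrix (Fin n) (Fin n) ℝ} (hD : D.IsDiag) : offDiag D = 0 := by
  ext p q
  by_cases h : p = q
  · simp [offDiag, h]
  · simp [offDiag, h, hD h]

lemma frob_off_le (M : Matrix (Fin n) (Fin n) ℝ) : frobNorm (offDiag M) ≤ frobNorm M := by
  apply Real.sqrt_le_sqrt
  apply Finset.sum_le_sum
  intro p _
  apply Finset.sum_le_sum
  intro q _
  by_cases h : p = q <;> simp [offDiag, h] <;> positivity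

end OffQAQAux

open OffQAQAux in
/-- Bound on `‖off(Qᵀ A Q)‖_F` for a nearly exact eigendecomposition. -/
theorem off_QAQ_bound {n : ℕ} (A E Z δZ D : Matrix (Fin n) (Fin n) ℝ)
    (hA : Aᵀ = A) (hE : Eᵀ = E)
    (horth : (Z + δZ)ᵀ * (Z + δZ) = 1)
    (hD : D.IsDiag)
    (hfac : A + E = (Z + δZ) * D * (Z + δZ)ᵀ) :
    ∀ Q : Matrix (Fin n) (Fin n) ℝ,
      frobNorm (offDiag (Qᵀ * A * Q)) ≤
        specNorm A * frobNorm (Q - Z) ^ 2 +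
          2 * specNorm A * specNorm Z * frobNorm (Q - Z) +
          frobNorm A * (2 * specNorm Z + specNorm δZ) * specNorm δZ + frobNorm E := by
  intro Q
  set P := Z + δZ with hP
  set B := Q - Z with hB
  -- PᵀAP = D - PᵀEP
  have hPAP : Pᵀ * A * P = D - Pᵀ * E * P := by
    have h1 : Pᵀ * (A + E) * P = Pᵀ * (P * D * Pᵀ) * P := by rw [← hfac]
    have h2 : Pᵀ * (P * D * Pᵀ) * P = (Pᵀ * P) * D * (Pᵀ * P) := by noncomm_ring
    rw [h2, horth, one_mul, mul_one] at h1
    have h3 : Pᵀ * (A + E) * P = Pᵀ * A * P + Pᵀ * E * P := by noncomm_ring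
    rw [h3] at h1
    linear_combination (norm := noncomm_ring) h1
  -- decomposition identity
  have hQAQ : Qᵀ * A * Q =
      Bᵀ * A * B + Bᵀ * A * Z + Zᵀ * A * B + (D - Pᵀ * E * P)
        - δZᵀ * A * Z - Zᵀ * A * δZ - δZᵀ * A * δZ := by
    rw [← hPAP, hB, hP]
    simp only [Matrix.transpose_sub, Matrix.transpose_add]
    noncomm_ring
  have hid : offDiag (Qᵀ * A * Q) =
      offDiag (Bᵀ * A * B) + offDiag (Bᵀ * A * Z) + offDiag (Zᵀ * A * B)
        - offDiag (Pᵀ * E * P)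
        - offDiag (δZᵀ * A * Z) - offDiag (Zᵀ * A * δZ) - offDiag (δZᵀ * A * δZ) := by
    rw [hQAQ]
    simp only [off_add, off_sub, off_isDiag hD]
    abel
  -- triangle inequality
  have htri : frobNorm (offDiag (Qᵀ * A * Q)) ≤
      frobNorm (Bᵀ * A * B) + frobNorm (Bᵀ * A * Z) + frobNorm (Zᵀ * A * B)
        + frobNorm (Pᵀ * E * P)
        + frobNorm (δZᵀ * A * Z) + frobNorm (Zᵀ * A * δZ) + frobNorm (δZᵀ * A * δZ) := by
    rw [hid]
    have t1 := frob_off_le (Bᵀ * A * B)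
    have t2 := frob_off_le (Bᵀ * A * Z)
    have t3 := frob_off_le (Zᵀ * A * B)
    have t4 := frob_off_le (Pᵀ * E * P)
    have t5 := frob_off_le (δZᵀ * A * Z)
    have t6 := frob_off_le (Zᵀ * A * δZ)
    have t7 := frob_off_le (δZᵀ * A * δZ)
    calc frobNorm (offDiag (Bᵀ * A * B) + offDiag (Bᵀ * A * Z) + offDiag (Zᵀ * A * B)
          - offDiag (Pᵀ * E * P) - offDiag (δZᵀ * A * Z) - offDiag (Zᵀ * A * δZ)
          - offDiag (δZᵀ * A * δZ))
        ≤ frobNorm (offDiag (Bᵀ * A * B) + offDiag (Bᵀ * A * Z) + offDiag (Zᵀ * A * B)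
          - offDiag (Pᵀ * E * P) - offDiag (δZᵀ * A * Z) - offDiag (Zᵀ * A * δZ))
          + frobNorm (offDiag (δZᵀ * A * δZ)) := frob_sub_le _ _
      _ ≤ (frobNorm (offDiag (Bᵀ * A * B) + offDiag (Bᵀ * A * Z) + offDiag (Zᵀ * A * B)
          - offDiag (Pᵀ * E * P) - offDiag (δZᵀ * A * Z))
          + frobNorm (offDiag (Zᵀ * A * δZ))) + frobNorm (offDiag (δZᵀ * A * δZ)) := by
          gcongr; exact frob_sub_le _ _
      _ ≤ ((frobNorm (offDiag (Bᵀ * A * B) + offDiag (Bᵀ * A * Z) + offDiag (Zᵀ * A * B)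
          - offDiag (Pᵀ * E * P)) + frobNorm (offDiag (δZᵀ * A * Z)))
          + frobNorm (offDiag (Zᵀ * A * δZ))) + frobNorm (offDiag (δZᵀ * A * δZ)) := by
          gcongr; exact frob_sub_le _ _
      _ ≤ (((frobNorm (offDiag (Bᵀ * A * B) + offDiag (Bᵀ * A * Z) + offDiag (Zᵀ * A * B))
          + frobNorm (offDiag (Pᵀ * E * P))) + frobNorm (offDiag (δZᵀ * A * Z)))
          + frobNorm (offDiag (Zᵀ * A * δZ))) + frobNorm (offDiag (δZᵀ * A * δZ)) := by
          gcongr; exact frob_sub_le _ _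
      _ ≤ ((((frobNorm (offDiag (Bᵀ * A * B) + offDiag (Bᵀ * A * Z))
          + frobNorm (offDiag (Zᵀ * A * B)))
          + frobNorm (offDiag (Pᵀ * E * P))) + frobNorm (offDiag (δZᵀ * A * Z)))
          + frobNorm (offDiag (Zᵀ * A * δZ))) + frobNorm (offDiag (δZᵀ * A * δZ)) := by
          gcongr; exact frob_add_le _ _
      _ ≤ (((((frobNorm (offDiag (Bᵀ * A * B)) + frobNorm (offDiag (Bᵀ * A * Z)))
          + frobNorm (offDiag (Zᵀ * A * B)))
          + frobNorm (offDiag (Pᵀ * E * P))) + frobNorm (offDiag (δZᵀ * A * Z)))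
          + frobNorm (offDiag (Zᵀ * A * δZ))) + frobNorm (offDiag (δZᵀ * A * δZ)) := by
          gcongr; exact frob_add_le _ _
      _ ≤ frobNorm (Bᵀ * A * B) + frobNorm (Bᵀ * A * Z) + frobNorm (Zᵀ * A * B)
          + frobNorm (Pᵀ * E * P) + frobNorm (δZᵀ * A * Z) + frobNorm (Zᵀ * A * δZ)
          + frobNorm (δZᵀ * A * δZ) := by
          linarith [t1, t2, t3, t4, t5, t6, t7]
  -- individual bounds
  have hPle : specNorm P ≤ 1 := spec_orth_le_one horth
  have hPTle : specNorm Pᵀ ≤ 1 := by rw [spec_transpose]; exact hPle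
  have b1 : frobNorm (Bᵀ * A * B) ≤ specNorm A * frobNorm B ^ 2 := by
    calc frobNorm (Bᵀ * A * B) = frobNorm (Bᵀ * (A * B)) := by rw [Matrix.mul_assoc]
      _ ≤ specNorm Bᵀ * frobNorm (A * B) := frob_mul_le_spec_frob _ _
      _ ≤ specNorm Bᵀ * (specNorm A * frobNorm B) := by
          have := frob_mul_le_spec_frob A B
          exact mul_le_mul_of_nonneg_left this (spec_nonneg _)
      _ ≤ frobNorm B * (specNorm A * frobNorm B) := by
          apply mul_le_mul_of_nonneg_right _
            (mul_nonneg (spec_nonneg A) (frob_nonneg B))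
          rw [spec_transpose]
          exact spec_le_frob B
      _ = specNorm A * frobNorm B ^ 2 := by ring
  have b2 : frobNorm (Bᵀ * A * Z) ≤ specNorm A * specNorm Z * frobNorm B := by
    calc frobNorm (Bᵀ * A * Z) ≤ frobNorm (Bᵀ * A) * specNorm Z := frob_mul_le_frob_spec _ _
      _ ≤ (frobNorm Bᵀ * specNorm A) * specNorm Z :=
          mul_le_mul_of_nonneg_right (frob_mul_le_frob_spec Bᵀ A) (spec_nonneg Z)
      _ = specNorm A * specNorm Z * frobNorm B := by rw [frob_transpose]; ring
  have b3 : frobNorm (Zᵀ * A * B) ≤ specNorm A * specNorm Z * frobNorm B := by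
    calc frobNorm (Zᵀ * A * B) = frobNorm (Zᵀ * (A * B)) := by rw [Matrix.mul_assoc]
      _ ≤ specNorm Zᵀ * frobNorm (A * B) := frob_mul_le_spec_frob _ _
      _ ≤ specNorm Zᵀ * (specNorm A * frobNorm B) := by
          have := frob_mul_le_spec_frob A B
          exact mul_le_mul_of_nonneg_left this (spec_nonneg _)
      _ = specNorm A * specNorm Z * frobNorm B := by rw [spec_transpose]; ring
  have b4 : frobNorm (δZᵀ * A * Z) ≤ specNorm δZ * frobNorm A * specNorm Z := by
    have := frob_triple δZᵀ A Z
    rwa [spec_transpose] at this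
  have b5 : frobNorm (Zᵀ * A * δZ) ≤ specNorm Z * frobNorm A * specNorm δZ := by
    have := frob_triple Zᵀ A δZ
    rwa [spec_transpose] at this
  have b6 : frobNorm (δZᵀ * A * δZ) ≤ specNorm δZ * frobNorm A * specNorm δZ := by
    have := frob_triple δZᵀ A δZ
    rwa [spec_transpose] at this
  have b7 : frobNorm (Pᵀ * E * P) ≤ frobNorm E := by
    have h := frob_triple Pᵀ E P
    nlinarith [frob_nonneg E, spec_nonneg Pᵀ, spec_nonneg P, hPle, hPTle,
      mul_le_mul_of_nonneg_right (mul_le_of_le_one_left (frob_nonneg E) hPTle : specNorm Pᵀ * frobNorm E ≤ frobNorm E) (spec_nonneg P)]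
  have heq : specNorm δZ * frobNorm A * specNorm Z + specNorm Z * frobNorm A * specNorm δZ
      + specNorm δZ * frobNorm A * specNorm δZ
      = frobNorm A * (2 * specNorm Z + specNorm δZ) * specNorm δZ := by ring
  linarith [htri, b1, b2, b3, b4, b5, b6, b7]
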